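/- Let M be a submonoid of the additive monoid ℚ₊ of nonnegative rational numbers that is difference-closed, and let F be a field. Then the monoid domain F[X;M] is an AP domain, i.e., every irreducible element of F[X;M] is prime. -/

import Mathlib

/-- `M` is difference-closed: for any `a, b ∈ M` with `b ≤ a`, `a - b ∈ M`. -/
def DifferenceClosed (M : AddSubmonoid ℚ) : Prop :=
  ∀ a ∈ M, ∀ b ∈ M, b ≤ a → a - b ∈ M

section Aux

open Finsupp AddMonoidAlgebra Polynomial

/-- Every element of the subgroup generated by a submonoid of `ℚ` is a difference
of two elements of the submonoid. -/
lemma diff_of_mem_closure (M : AddSubmonoid ℚ) {g : ℚ}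
    (hg : g ∈ AddSubgroup.closure (M : Set ℚ)) : ∃ a ∈ M, ∃ b ∈ M, g = a - b := by
  let D : AddSubgroup ℚ :=
    { carrier := {x | ∃ a ∈ M, ∃ b ∈ M, x = a - b}
      zero_mem' := ⟨0, M.zero_mem, 0, M.zero_mem, by ring⟩
      add_mem' := by
        rintro x y ⟨a, ha, b, hb, rfl⟩ ⟨c, hc, e, he, rfl⟩
        exact ⟨a + c, M.add_mem ha hc, b + e, M.add_mem hb he, by ring⟩
      neg_mem' := by
        rintro x ⟨a, ha, b, hb, rfl⟩
        exact ⟨b, hb, a, ha, by ring⟩ }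
  have hle : AddSubgroup.closure (M : Set ℚ) ≤ D :=
    (AddSubgroup.closure_le D).2 fun x hx => ⟨x, hx, 0, M.zero_mem, by ring⟩
  exact hle hg

/-- The gcd of a finite set of integers lies in the subgroup it generates. -/
lemma gcd_mem_closure (T : Finset ℤ) :
    T.gcd id ∈ AddSubgroup.closure (T : Set ℤ) := by
  obtain ⟨a, ha⟩ := Int.subgroup_cyclic (AddSubgroup.closure (T : Set ℤ))
  have hdvd : a ∣ T.gcd id := by
    refine Finset.dvd_gcd fun t ht => ?_
    have h1 : t ∈ AddSubgroup.closure (T : Set ℤ) := AddSubgroup.subset_closure ht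
    rw [ha, AddSubgroup.mem_closure_singleton] at h1
    obtain ⟨n, hn⟩ := h1
    exact ⟨n, by rw [show (id t : ℤ) = t from rfl, ← hn, zsmul_eq_mul, Int.cast_id, mul_comm]⟩
  obtain ⟨k, hk⟩ := hdvd
  have haT : a ∈ AddSubgroup.closure (T : Set ℤ) := by
    rw [ha]
    exact AddSubgroup.subset_closure rfl
  have hgk : T.gcd id = k • a := by rw [zsmul_eq_mul, Int.cast_id, hk, mul_comm]
  rw [hgk]
  exact AddSubgroup.zsmul_mem _ haT k

/-- Given finitely many elements of a nonnegative difference-closed submonoid `M` of `ℚ`,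
not all zero, there is a positive `q ∈ M` such that each of them is a natural multiple
of `q`. -/
lemma exists_common_generator (M : AddSubmonoid ℚ) (hM : ∀ x ∈ M, (0 : ℚ) ≤ x)
    (hd : DifferenceClosed M) (S : Finset ℚ) (hS : ∀ s ∈ S, s ∈ M)
    (hne : ∃ s ∈ S, s ≠ 0) :
    ∃ q : ℚ, q ∈ M ∧ 0 < q ∧ ∀ s ∈ S, ∃ n : ℕ, s = n * q := by
  classical
  set d : ℕ := ∏ s ∈ S, s.den with hdd
  have hd0 : 0 < d := Finset.prod_pos fun s _ => s.pos
  have hdQ : (d : ℚ) ≠ 0 := by positivity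
  set N : ℚ → ℤ := fun s => (s * d).num with hN
  have hNs : ∀ s ∈ S, (N s : ℚ) = s * d := by
    intro s hs
    obtain ⟨m, hm⟩ : s.den ∣ d := Finset.dvd_prod_of_mem _ hs
    have hden : (s.den : ℚ) ≠ 0 := by exact_mod_cast s.den_nz
    have key : ((s.num : ℚ)) = s * (s.den : ℚ) := by
      have h0 : ((s.num : ℚ) / (s.den : ℚ)) * (s.den : ℚ) = s * (s.den : ℚ) := by
        rw [Rat.num_div_den]
      rwa [div_mul_cancel₀ _ hden] at h0
    have h1 : s * (d : ℚ) = ((s.num * m : ℤ) : ℚ) := by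
      rw [hm]
      push_cast
      rw [key]
      ring
    simp only [hN, h1, Rat.num_intCast]
  set g : ℤ := S.gcd N with hg
  have hg0 : 0 ≤ g := by
    have h := Finset.normalize_gcd (s := S) (f := N)
    exact Int.nonneg_of_normalize_eq_self h
  have hgne : g ≠ 0 := by
    obtain ⟨s, hsS, hs0⟩ := hne
    intro h
    have h1 : N s = 0 := Finset.gcd_eq_zero_iff.mp h s hsS
    apply hs0
    have h2 : (N s : ℚ) = 0 := by rw [h1]; norm_num
    rw [hNs s hsS] at h2
    rcases mul_eq_zero.mp h2 with h | h
    · exact h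
    · exact absurd h hdQ
  have hgpos : 0 < g := lt_of_le_of_ne hg0 (Ne.symm hgne)
  have hgQpos : (0 : ℚ) < (g : ℚ) / d := by positivity
  -- q ∈ M
  set T : Finset ℤ := S.image N with hT
  have hTg : T.gcd id = g := by rw [hT, Finset.gcd_image]; rfl
  have hgc : g ∈ AddSubgroup.closure (T : Set ℤ) := hTg ▸ gcd_mem_closure T
  let f : ℤ →+ ℚ :=
    { toFun := fun z => (z : ℚ) / d
      map_zero' := by simp
      map_add' := fun x y => by push_cast; ring }
  have hq1 : (g : ℚ) / d ∈ AddSubgroup.closure (f '' (T : Set ℤ)) := by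
    have h1 : f g ∈ (AddSubgroup.closure (T : Set ℤ)).map f :=
      AddSubgroup.mem_map_of_mem f hgc
    rwa [AddMonoidHom.map_closure] at h1
  have himg : f '' (T : Set ℤ) ⊆ (M : Set ℚ) := by
    rintro x ⟨t, ht, rfl⟩
    obtain ⟨s, hsS, rfl⟩ := Finset.mem_image.mp ht
    show (N s : ℚ) / d ∈ M
    rw [hNs s hsS, mul_div_assoc, div_self hdQ, mul_one]
    exact hS s hsS
  have hqM' : (g : ℚ) / d ∈ AddSubgroup.closure (M : Set ℚ) :=
    AddSubgroup.closure_mono himg hq1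
  obtain ⟨a, haM, b, hbM, hab⟩ := diff_of_mem_closure M hqM'
  have hba : b ≤ a := by
    have := hgQpos
    rw [hab] at this
    linarith
  have hqM : (g : ℚ) / d ∈ M := by
    have := hd a haM b hbM hba
    rwa [← hab] at this
  refine ⟨(g : ℚ) / d, hqM, hgQpos, ?_⟩
  intro s hsS
  obtain ⟨k, hk⟩ : g ∣ N s := Finset.gcd_dvd hsS
  have hNnn : 0 ≤ N s := by
    have hs0 : 0 ≤ s := hM s (hS s hsS)
    have : (0 : ℚ) ≤ s * d := by positivity
    exact Rat.num_nonneg.mpr this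
  have hk0 : 0 ≤ k := by
    by_contra h
    push_neg at h
    nlinarith [hk ▸ hNnn]
  refine ⟨k.toNat, ?_⟩
  have h1 : s = (N s : ℚ) / d := by
    rw [hNs s hsS, mul_div_assoc, div_self hdQ, mul_one]
  have h2 : (N s : ℚ) = (g : ℚ) * (k : ℚ) := by exact_mod_cast congrArg (Int.cast : ℤ → ℚ) hk
  have h3 : ((k.toNat : ℕ) : ℚ) = (k : ℚ) := by exact_mod_cast Int.toNat_of_nonneg hk0
  rw [h1, h2, h3]
  ring

/-- If every exponent in the support of `x` is in the range of `f`, then `x` is in the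
range of `Finsupp.mapDomain f`. -/
lemma exists_mapDomain_preimage {F : Type*} [Semiring F] {G H : Type*}
    (f : G → H) :
    ∀ x : H →₀ F, (∀ a ∈ x.support, a ∈ Set.range f) →
      ∃ y : G →₀ F, Finsupp.mapDomain f y = x := by
  intro x
  induction x using Finsupp.induction with
  | zero => exact fun _ => ⟨0, Finsupp.mapDomain_zero⟩
  | single_add a0 b x' ha0 hb ih =>
    intro h
    have hmem : a0 ∈ (Finsupp.single a0 b + x').support := by
      rw [Finsupp.mem_support_iff, Finsupp.add_apply, Finsupp.single_eq_same,
        Finsupp.notMem_support_iff.mp ha0, add_zero]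
      exact hb
    obtain ⟨n, hn⟩ := h a0 hmem
    have hsub : ∀ a ∈ x'.support, a ∈ Set.range f := by
      intro a haS
      refine h a ?_
      have hne : a ≠ a0 := fun hEq => ha0 (hEq ▸ haS)
      rw [Finsupp.mem_support_iff, Finsupp.add_apply, Finsupp.single_eq_of_ne hne]
      simpa [Finsupp.mem_support_iff] using haS
    obtain ⟨y, hy⟩ := ih hsub
    refine ⟨Finsupp.single n b + y, ?_⟩
    rw [Finsupp.mapDomain_add, Finsupp.mapDomain_single, hn, hy]

/-- Version of `exists_mapDomain_preimage` phrased with `AddMonoidAlgebra`. -/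
lemma exists_mapDomain_preimage' {F : Type*} [Semiring F] {G H : Type*}
    (f : G → H) (x : AddMonoidAlgebra F H) (hx : ∀ a ∈ x.coeff.support, a ∈ Set.range f) :
    ∃ y : AddMonoidAlgebra F G, AddMonoidAlgebra.mapDomain f y = x := by
  obtain ⟨y, hy⟩ := exists_mapDomain_preimage f x.coeff hx
  exact ⟨.ofCoeff y, AddMonoidAlgebra.coeff_injective hy⟩

/-- For a nontrivial finite set of elements of `M`, produce an injective additive hom
`ℕ →+ M` hitting all of them. -/
lemma exists_hom (M : AddSubmonoid ℚ) (hM : ∀ x ∈ M, (0 : ℚ) ≤ x)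
    (hd : DifferenceClosed M) (S : Finset ℚ) (hS : ∀ s ∈ S, s ∈ M)
    (hne : ∃ s ∈ S, s ≠ 0) :
    ∃ φ : ℕ →+ M, Function.Injective φ ∧ ∀ a : M, (a : ℚ) ∈ S → a ∈ Set.range φ := by
  obtain ⟨q, hqM, hq0, hmul⟩ := exists_common_generator M hM hd S hS hne
  refine ⟨multiplesHom M ⟨q, hqM⟩, ?_, ?_⟩
  · intro m n h
    have h1 : ((multiplesHom M ⟨q, hqM⟩ m : M) : ℚ) = ((multiplesHom M ⟨q, hqM⟩ n : M) : ℚ) := by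
      rw [h]
    have h2 : (m : ℚ) * q = (n : ℚ) * q := by
      simpa [multiplesHom_apply, nsmul_eq_mul] using h1
    have h3 : (m : ℚ) = n := mul_right_cancel₀ (ne_of_gt hq0) h2
    exact_mod_cast h3
  · intro a haS
    obtain ⟨n, hn⟩ := hmul a haS
    refine ⟨n, ?_⟩
    apply Subtype.ext
    show ((n • (⟨q, hqM⟩ : M) : M) : ℚ) = (a : ℚ)
    rw [hn]
    simp [nsmul_eq_mul]

lemma isUnit_single_zero {F : Type*} [Field F] {G : Type*} [AddCommMonoid G] {r : F} (hr : r ≠ 0) :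
    IsUnit (AddMonoidAlgebra.single (0 : G) r : AddMonoidAlgebra F G) := by
  have h : (AddMonoidAlgebra.single (0 : G) r : AddMonoidAlgebra F G) *
      AddMonoidAlgebra.single (0 : G) r⁻¹ = 1 := by
    rw [AddMonoidAlgebra.single_mul_single, mul_inv_cancel₀ hr, add_zero,
      AddMonoidAlgebra.one_def]
  exact IsUnit.of_mul_eq_one
    (AddMonoidAlgebra.single (0 : G) r⁻¹ : AddMonoidAlgebra F G) h

/-- Units of `AddMonoidAlgebra F M` are constants. -/
lemma isUnit_eq_const (M : AddSubmonoid ℚ) (hM : ∀ x ∈ M, (0 : ℚ) ≤ x)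
    (hd : DifferenceClosed M) (F : Type*) [Field F]
    (u : AddMonoidAlgebra F M) (hu : IsUnit u) :
    ∃ r : F, u = AddMonoidAlgebra.single 0 r := by
  classical
  obtain ⟨⟨u, v, huv, hvu⟩, rfl⟩ := hu
  show ∃ r : F, u = AddMonoidAlgebra.single 0 r
  set S : Finset ℚ := (u.coeff.support ∪ v.coeff.support).image (fun m : M => (m : ℚ)) with hSdef
  have hSM : ∀ s ∈ S, s ∈ M := by
    intro s hs
    obtain ⟨m, _, rfl⟩ := Finset.mem_image.mp hs
    exact m.2
  by_cases hne : ∃ s ∈ S, s ≠ 0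
  · obtain ⟨φ, hφinj, hφ⟩ := exists_hom M hM hd S hSM hne
    have hu' : ∀ a ∈ u.coeff.support, a ∈ Set.range φ := fun a ha =>
      hφ a (Finset.mem_image_of_mem _ (Finset.mem_union_left _ ha))
    have hv' : ∀ a ∈ v.coeff.support, a ∈ Set.range φ := fun a ha =>
      hφ a (Finset.mem_image_of_mem _ (Finset.mem_union_right _ ha))
    obtain ⟨u0, hu0⟩ := exists_mapDomain_preimage' (F := F) φ u hu'
    obtain ⟨v0, hv0⟩ := exists_mapDomain_preimage' (F := F) φ v hv'
    set Φ : AddMonoidAlgebra F ℕ →+* AddMonoidAlgebra F M :=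
      AddMonoidAlgebra.mapDomainRingHom F φ with hΦdef
    have hΦinj : Function.Injective Φ := AddMonoidAlgebra.mapDomain_injective hφinj
    have hΦu : Φ u0 = u := hu0
    have hΦv : Φ v0 = v := hv0
    have h1 : u0 * v0 = 1 := by
      apply hΦinj
      rw [map_mul, hΦu, hΦv, huv, map_one]
    set e := (Polynomial.toFinsuppIso F) with hedef
    have h2 : e.symm u0 * e.symm v0 = 1 := by
      rw [← map_mul, h1, map_one]
    have h3 : IsUnit (e.symm u0) := IsUnit.of_mul_eq_one _ h2
    obtain ⟨r, _, hCr⟩ := Polynomial.isUnit_iff.mp h3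
    have h4 : u0 = AddMonoidAlgebra.single 0 r := by
      have h5 : e (Polynomial.C r) = u0 := by rw [hCr]; simp
      rw [← h5]
      simp [hedef, Polynomial.toFinsuppIso_apply, Polynomial.toFinsupp_C]
    refine ⟨r, ?_⟩
    rw [← hΦu, h4]
    show AddMonoidAlgebra.mapDomain φ (AddMonoidAlgebra.single 0 r) = AddMonoidAlgebra.single 0 r
    rw [AddMonoidAlgebra.mapDomain_single, map_zero]
  · push_neg at hne
    have hsub : u.coeff.support ⊆ {0} := by
      intro m hm
      have : (m : ℚ) = 0 :=
        hne _ (Finset.mem_image_of_mem _ (Finset.mem_union_left _ hm))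
      simp only [Finset.mem_singleton]
      exact Subtype.ext (by simpa using this)
    exact ⟨u.coeff 0, AddMonoidAlgebra.coeff_injective (Finsupp.support_subset_singleton.mp hsub)⟩

end Aux

theorem ap_of_differenceClosed (M : AddSubmonoid ℚ)
    (hM : ∀ x ∈ M, (0 : ℚ) ≤ x) (hd : DifferenceClosed M)
    (F : Type*) [Field F] :
    ∀ x : AddMonoidAlgebra F M, Irreducible x → Prime x := by
  classical
  intro x hx
  refine ⟨hx.ne_zero, hx.not_isUnit, ?_⟩
  intro a b hab
  by_cases ha0 : a = 0
  · left; rw [ha0]; exact dvd_zero x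
  by_cases hb0 : b = 0
  · right; rw [hb0]; exact dvd_zero x
  obtain ⟨c, hc⟩ := hab
  set S : Finset ℚ :=
    (x.coeff.support ∪ a.coeff.support ∪ b.coeff.support ∪ c.coeff.support).image (fun m : M => (m : ℚ)) with hSdef
  have hSM : ∀ s ∈ S, s ∈ M := by
    intro s hs
    obtain ⟨m, _, rfl⟩ := Finset.mem_image.mp hs
    exact m.2
  by_cases hne : ∃ s ∈ S, s ≠ 0
  · obtain ⟨φ, hφinj, hφ⟩ := exists_hom M hM hd S hSM hne
    have hsupp : ∀ y : AddMonoidAlgebra F M,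
        y.coeff.support ⊆ x.coeff.support ∪ a.coeff.support ∪ b.coeff.support ∪ c.coeff.support →
        ∃ y0 : AddMonoidAlgebra F ℕ, AddMonoidAlgebra.mapDomain φ y0 = y := by
      intro y hy
      exact exists_mapDomain_preimage' φ y
        (fun m hm => hφ m (Finset.mem_image_of_mem _ (hy hm)))
    obtain ⟨x0, hX⟩ := hsupp x (fun t ht =>
      Finset.mem_union_left _ (Finset.mem_union_left _ (Finset.mem_union_left _ ht)))
    obtain ⟨a0, hA⟩ := hsupp a (fun t ht =>
      Finset.mem_union_left _ (Finset.mem_union_left _ (Finset.mem_union_right _ ht)))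
    obtain ⟨b0, hB⟩ := hsupp b (fun t ht =>
      Finset.mem_union_left _ (Finset.mem_union_right _ ht))
    obtain ⟨c0, hC⟩ := hsupp c (fun t ht => Finset.mem_union_right _ ht)
    set Φ : AddMonoidAlgebra F ℕ →+* AddMonoidAlgebra F M :=
      AddMonoidAlgebra.mapDomainRingHom F φ with hΦdef
    have hΦinj : Function.Injective Φ := AddMonoidAlgebra.mapDomain_injective hφinj
    have hX' : Φ x0 = x := hX
    have hA' : Φ a0 = a := hA
    have hB' : Φ b0 = b := hB
    have hC' : Φ c0 = c := hC
    have h1 : a0 * b0 = x0 * c0 := by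
      apply hΦinj
      rw [map_mul, map_mul, hA', hB', hX', hC']
      exact hc
    have hxir : Irreducible x0 := by
      constructor
      · intro hu
        exact hx.not_isUnit (hX' ▸ hu.map Φ)
      · intro u v huv
        have hxuv : x = Φ u * Φ v := by rw [← map_mul, ← huv, hX']
        have key : ∀ w w' : AddMonoidAlgebra F ℕ, x = Φ w * Φ w' →
            IsUnit (Φ w) → IsUnit w := by
          intro w w' hww hwu
          obtain ⟨r, hr⟩ := isUnit_eq_const M hM hd F (Φ w) hwu
          have hr0 : r ≠ 0 := by
            intro h0
            rw [h0, AddMonoidAlgebra.single_zero] at hr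
            rw [hr] at hwu
            exact not_isUnit_zero hwu
          have hw : w = AddMonoidAlgebra.single 0 r := by
            apply hΦinj
            rw [hr]
            symm
            show AddMonoidAlgebra.mapDomain φ (AddMonoidAlgebra.single 0 r) = AddMonoidAlgebra.single 0 r
            rw [AddMonoidAlgebra.mapDomain_single, map_zero]
          rw [hw]
          exact isUnit_single_zero hr0
        rcases hx.isUnit_or_isUnit hxuv with h | h
        · exact Or.inl (key u v hxuv h)
        · exact Or.inr (key v u (by rw [hxuv]; ring) h)
    have hxpr : Prime x0 := by
      have h5 : Irreducible ((Polynomial.toFinsuppIso F).symm x0) :=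
        (MulEquiv.irreducible_iff (Polynomial.toFinsuppIso F).symm).mpr hxir
      have h6 : Prime ((Polynomial.toFinsuppIso F).symm x0) :=
        UniqueFactorizationMonoid.irreducible_iff_prime.mp h5
      exact (MulEquiv.prime_iff (Polynomial.toFinsuppIso F).symm).mp h6
    have hdvd0 : x0 ∣ a0 * b0 := ⟨c0, h1⟩
    rcases hxpr.2.2 a0 b0 hdvd0 with h | h
    · left
      have h2 := map_dvd Φ h
      rwa [hX', hA'] at h2
    · right
      have h2 := map_dvd Φ h
      rwa [hX', hB'] at h2
  · push_neg at hne
    exfalso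
    have hsub : x.coeff.support ⊆ {0} := by
      intro m hm
      have hmem : (m : ℚ) ∈ S := Finset.mem_image_of_mem _
        (Finset.mem_union_left _ (Finset.mem_union_left _ (Finset.mem_union_left _ hm)))
      have : (m : ℚ) = 0 := hne _ hmem
      simp only [Finset.mem_singleton]
      exact Subtype.ext (by simpa using this)
    have hxr : x = AddMonoidAlgebra.single 0 (x.coeff 0) :=
      AddMonoidAlgebra.coeff_injective (Finsupp.support_subset_singleton.mp hsub)
    have hr0 : x.coeff 0 ≠ 0 := by
      intro h0
      rw [h0, AddMonoidAlgebra.single_zero] at hxr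
      exact hx.ne_zero hxr
    exact hx.not_isUnit (hxr ▸ isUnit_single_zero hr0)
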